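/- For each permutation f of the Hermitian curve H(2,q²), the set graph(f) = {X ⊗ X^f : X ∈ H(2,q²)} is a set of q³ + 1 totally isotropic points of the Hermitian variety defined by β ⊗ β, no two distinct elements of which are orthogonal with respect to β ⊗ β. -/

import Mathlib

set_option linter.unusedSectionVars false
set_option maxHeartbeats 1000000

namespace Stmt11X

open Finset Polynomial Submodule

section Aux
variable {q : ℕ} {K : Type*} [Field K] [Fintype K] [DecidableEq K]
variable {β : (Fin 3 → K) → (Fin 3 → K) → K}


lemma powpow (hK : Fintype.card K = q ^ 2) (a : K) : (a ^ q) ^ q = a := by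
  rw [← pow_mul, ← sq, ← hK, FiniteField.pow_card]

lemma frobadd (hq : IsPrimePow q) (hK : Fintype.card K = q ^ 2) (a b : K) :
    (a + b) ^ q = a ^ q + b ^ q := by
  obtain ⟨p, k, hp, hk, rfl⟩ := hq
  have hp' : Nat.Prime p := hp.nat_prime
  haveI : Fact (Nat.Prime p) := ⟨hp'⟩
  obtain ⟨n, hn, hcard⟩ := FiniteField.card K (ringChar K)
  have h1 : ringChar K ∣ Fintype.card K := hcard ▸ dvd_pow_self _ (by exact_mod_cast n.ne_zero)
  rw [hK] at h1
  have h2 : ringChar K = p :=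
    (Nat.prime_dvd_prime_iff_eq hn hp').1 (hn.dvd_of_dvd_pow (hn.dvd_of_dvd_pow h1))
  haveI : CharP K p := h2 ▸ ringChar.charP K
  exact add_pow_char_pow a b p k

lemma frobneg (hq : IsPrimePow q) (hK : Fintype.card K = q ^ 2) (a : K) :
    (-a) ^ q = -(a ^ q) := by
  have h := frobadd hq hK a (-a)
  rw [add_neg_cancel] at h
  have h0 : (0 : K) ^ q = 0 := zero_pow (by have := hq.two_le; omega)
  rw [h0] at h
  linear_combination -h

lemma root_bound (n : ℕ) (hn : 0 < n) (c : K) :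
    (univ.filter fun x : K => x ^ n = c).card ≤ n := by
  classical
  have hsub : (univ.filter fun x : K => x ^ n = c) ⊆ (Polynomial.nthRoots n c).toFinset := by
    intro x hx
    simp only [mem_filter, mem_univ, true_and] at hx
    simpa [Multiset.mem_toFinset, Polynomial.mem_nthRoots hn] using hx
  calc (univ.filter fun x : K => x ^ n = c).card
      ≤ (Polynomial.nthRoots n c).toFinset.card := Finset.card_le_card hsub
    _ ≤ Multiset.card (Polynomial.nthRoots n c) := Multiset.toFinset_card_le _
    _ ≤ n := Polynomial.card_nthRoots n c

lemma fixed_card_le (hq : 2 ≤ q) : (univ.filter fun a : K => a ^ q = a).card ≤ q := by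
  classical
  have hsub : (univ.filter fun a : K => a ^ q = a) ⊆
      insert (0 : K) (univ.filter fun x : K => x ^ (q - 1) = 1) := by
    intro a ha
    simp only [mem_filter, mem_univ, true_and] at ha
    rcases eq_or_ne a 0 with rfl | h0
    · exact mem_insert_self _ _
    · refine mem_insert_of_mem ?_
      simp only [mem_filter, mem_univ, true_and]
      have : a ^ (q - 1) * a = 1 * a := by
        rw [one_mul, ← pow_succ, Nat.sub_add_cancel (by omega)]; exact ha
      exact mul_right_cancel₀ h0 this
  calc (univ.filter fun a : K => a ^ q = a).card
      ≤ _ := Finset.card_le_card hsub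
    _ ≤ (univ.filter fun x : K => x ^ (q - 1) = 1).card + 1 := Finset.card_insert_le _ _
    _ ≤ (q - 1) + 1 := by gcongr; exact root_bound (q - 1) (by omega) 1
    _ = q := by omega

lemma exists_nonfixed (hq : 2 ≤ q) (hK : Fintype.card K = q ^ 2) :
    ∃ a : K, a ^ q ≠ a := by
  by_contra hcon
  push_neg at hcon
  have : (univ.filter fun a : K => a ^ q = a) = univ := by
    ext a; simp [hcon a]
  have hle := fixed_card_le (K := K) hq
  rw [this, Finset.card_univ, hK] at hle
  nlinarith

lemma norm_fixed (hK : Fintype.card K = q ^ 2) (x : K) :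
    (x ^ (q + 1)) ^ q = x ^ (q + 1) := by
  have h1 : (x ^ (q + 1)) ^ q = (x ^ q) ^ q * x ^ q := by
    rw [pow_succ, mul_pow]
  rw [h1, powpow hK, mul_comm, ← pow_succ]

lemma sq_sub_one (hq : 2 ≤ q) : (q - 1) * (q + 1) + 1 = q ^ 2 := by
  obtain ⟨s, rfl⟩ : ∃ s, q = s + 2 := ⟨q - 2, by omega⟩
  show (s + 1) * (s + 3) + 1 = (s + 2) ^ 2
  ring

lemma norm_count (hq : 2 ≤ q) (hK : Fintype.card K = q ^ 2) (c : K) (hc0 : c ≠ 0)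
    (hcf : c ^ q = c) : (univ.filter fun x : K => x ^ (q + 1) = c).card = q + 1 := by
  classical
  set m := q + 1 with hm
  set A : Finset K := univ.filter (fun x => x ≠ 0) with hA
  have cardA : A.card = q ^ 2 - 1 := by
    rw [hA, Finset.filter_ne', Finset.card_erase_of_mem (mem_univ 0), Finset.card_univ, hK]
  set F : Finset K := univ.filter (fun a => a ^ q = a) with hF
  set Fstar : Finset K := F.erase 0 with hFstar
  have hFcard : F.card ≤ q := by rw [hF]; exact fixed_card_le hq
  have cardFstar : Fstar.card ≤ q - 1 := by
    have h0F : (0 : K) ∈ F := by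
      simp only [hF, mem_filter, mem_univ, true_and]
      exact zero_pow (by omega)
    rw [hFstar, Finset.card_erase_of_mem h0F]
    omega
  set I : Finset K := A.image (fun x => x ^ m) with hI
  have hIsub : I ⊆ Fstar := by
    intro a ha
    rw [hI, Finset.mem_image] at ha
    obtain ⟨x, hx, rfl⟩ := ha
    rw [hA, mem_filter] at hx
    refine Finset.mem_erase.2 ⟨pow_ne_zero _ hx.2, ?_⟩
    simp only [hF, mem_filter, mem_univ, true_and]
    exact norm_fixed hK x
  have key1 : ∀ a ∈ I, (A.filter fun x => x ^ m = a) =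
      (univ.filter fun x : K => x ^ m = a) := by
    intro a ha
    have ha0 : a ≠ 0 := (Finset.mem_erase.1 (hIsub ha)).1
    ext x
    simp only [hA, Finset.filter_filter, mem_filter, mem_univ, true_and]
    constructor
    · rintro ⟨-, h⟩; exact h
    · intro h; exact ⟨fun h0 => ha0 (by rw [← h, h0, zero_pow (by omega)]), h⟩
  have sumeq : A.card = ∑ a ∈ I, (A.filter fun x => x ^ m = a).card :=
    Finset.card_eq_sum_card_fiberwise (fun x hx => Finset.mem_image_of_mem _ hx)
  have fible : ∀ a ∈ I, (A.filter fun x => x ^ m = a).card ≤ m := by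
    intro a ha
    rw [key1 a ha]
    exact root_bound m (by omega) a
  have hsq := sq_sub_one hq
  have h3 : (q - 1) * m = q ^ 2 - 1 := by rw [hm]; omega
  have hub : ∑ a ∈ I, (A.filter fun x => x ^ m = a).card ≤ I.card * m := by
    calc ∑ a ∈ I, (A.filter fun x => x ^ m = a).card ≤ ∑ _a ∈ I, m :=
          Finset.sum_le_sum fible
      _ = I.card * m := by rw [Finset.sum_const, smul_eq_mul]
  have hIle : I.card ≤ q - 1 := le_trans (Finset.card_le_card hIsub) cardFstar
  have htot : I.card * m = q ^ 2 - 1 := by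
    have h1 : q ^ 2 - 1 ≤ I.card * m := by rw [← cardA, sumeq]; exact hub
    have h2 : I.card * m ≤ (q - 1) * m := Nat.mul_le_mul_right m hIle
    omega
  have hIcard : I.card = q - 1 := by
    have : I.card * m = (q - 1) * m := by omega
    exact Nat.eq_of_mul_eq_mul_right (by omega) this
  have fibeq : ∀ a ∈ I, (A.filter fun x => x ^ m = a).card = m := by
    by_contra hcon
    push_neg at hcon
    obtain ⟨a₀, ha₀, hne⟩ := hcon
    have hlt : (A.filter fun x => x ^ m = a₀).card < m := lt_of_le_of_ne (fible a₀ ha₀) hne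
    have hstrict : ∑ a ∈ I, (A.filter fun x => x ^ m = a).card < ∑ _a ∈ I, m :=
      Finset.sum_lt_sum (fun i hi => fible i hi) ⟨a₀, ha₀, hlt⟩
    rw [Finset.sum_const, smul_eq_mul] at hstrict
    omega
  have hIF : I = Fstar := Finset.eq_of_subset_of_card_le hIsub (by omega)
  have hcI : c ∈ I := by
    rw [hIF, hFstar]
    exact Finset.mem_erase.2 ⟨hc0, by simp only [hF, mem_filter, mem_univ, true_and]; exact hcf⟩
  rw [← key1 c hcI, fibeq c hcI]

lemma zero_fiber (hq : 2 ≤ q) :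
    (univ.filter fun x : K => x ^ (q + 1) = 0).card = 1 := by
  classical
  have : (univ.filter fun x : K => x ^ (q + 1) = 0) = {0} := by
    ext x
    simp only [mem_filter, mem_univ, true_and, Finset.mem_singleton,
      pow_eq_zero_iff (by omega : q + 1 ≠ 0)]
  rw [this, Finset.card_singleton]


lemma fiber_count (hq : IsPrimePow q) (hK : Fintype.card K = q ^ 2) (c : K) (hcf : c ^ q = c) :
    (univ.filter fun x : K => x ^ (q + 1) = c).card = if c = 0 then 1 else q + 1 := by
  split_ifs with h
  · subst h; exact zero_fiber hq.two_le
  · exact norm_count hq.two_le hK c h hcf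

lemma pair_count (hq : IsPrimePow q) (hK : Fintype.card K = q ^ 2) :
    (univ.filter fun w : K × K => w.1 ^ (q + 1) + w.2 ^ (q + 1) = 0).card
      = 1 + (q ^ 2 - 1) * (q + 1) := by
  classical
  have e : {w : K × K // w.1 ^ (q + 1) + w.2 ^ (q + 1) = 0}
      ≃ Σ x : K, {y : K // y ^ (q + 1) = -(x ^ (q + 1))} :=
    { toFun := fun w => ⟨w.val.1, w.val.2, by
        have := w.prop; linear_combination this⟩
      invFun := fun s => ⟨(s.1, s.2.val), by rw [s.2.prop]; ring⟩
      left_inv := fun w => rfl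
      right_inv := fun s => rfl }
  have h1 : (univ.filter fun w : K × K => w.1 ^ (q + 1) + w.2 ^ (q + 1) = 0).card
      = Fintype.card {w : K × K // w.1 ^ (q + 1) + w.2 ^ (q + 1) = 0} :=
    (Fintype.card_subtype _).symm
  rw [h1, Fintype.card_congr e, Fintype.card_sigma]
  have h2 : ∀ x : K, Fintype.card {y : K // y ^ (q + 1) = -(x ^ (q + 1))}
      = if x = 0 then 1 else q + 1 := by
    intro x
    rw [Fintype.card_subtype]
    rw [fiber_count hq hK _ (by rw [frobneg hq hK, norm_fixed hK])]
    congr 1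
    rw [neg_eq_zero, pow_eq_zero_iff (show q + 1 ≠ 0 by omega)]
  simp only [h2]
  rw [Finset.sum_ite, Finset.sum_const, Finset.sum_const, smul_eq_mul, smul_eq_mul]
  have h3 : (univ.filter fun x : K => x = 0) = {0} := by ext x; simp
  have h4 : (univ.filter fun x : K => ¬x = 0).card = q ^ 2 - 1 := by
    rw [Finset.filter_not, h3]
    rw [Finset.card_sdiff_of_subset (by intro x hx; simp at hx; simp [hx])]
    simp [hK]
  rw [h3, h4, Finset.card_singleton]

lemma triple_count (hq : IsPrimePow q) (hK : Fintype.card K = q ^ 2) :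
    (univ.filter fun v : Fin 3 → K => ∑ i, v i ^ (q + 1) = 0).card
      = (q ^ 3 + 1) * (q ^ 2 - 1) + 1 := by
  classical
  have e : {v : Fin 3 → K // ∑ i, v i ^ (q + 1) = 0}
      ≃ Σ w : K × K, {z : K // z ^ (q + 1) = -(w.1 ^ (q + 1) + w.2 ^ (q + 1))} :=
    { toFun := fun v => ⟨(v.val 0, v.val 1), v.val 2, by
        have := v.prop; rw [Fin.sum_univ_three] at this; linear_combination this⟩
      invFun := fun s => ⟨![s.1.1, s.1.2, s.2.val], by
        rw [Fin.sum_univ_three]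
        show s.1.1 ^ (q + 1) + s.1.2 ^ (q + 1) + s.2.val ^ (q + 1) = 0
        rw [s.2.prop]; ring⟩
      left_inv := fun v => by
        apply Subtype.ext
        funext i
        fin_cases i <;> rfl
      right_inv := fun s => rfl }
  have h1 : (univ.filter fun v : Fin 3 → K => ∑ i, v i ^ (q + 1) = 0).card
      = Fintype.card {v : Fin 3 → K // ∑ i, v i ^ (q + 1) = 0} :=
    (Fintype.card_subtype _).symm
  rw [h1, Fintype.card_congr e, Fintype.card_sigma]
  have h2 : ∀ w : K × K,
      Fintype.card {z : K // z ^ (q + 1) = -(w.1 ^ (q + 1) + w.2 ^ (q + 1))}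
      = if w.1 ^ (q + 1) + w.2 ^ (q + 1) = 0 then 1 else q + 1 := by
    intro w
    rw [Fintype.card_subtype]
    have hfix : (-(w.1 ^ (q + 1) + w.2 ^ (q + 1))) ^ q = -(w.1 ^ (q + 1) + w.2 ^ (q + 1)) := by
      rw [frobneg hq hK, frobadd hq hK, norm_fixed hK, norm_fixed hK]
    rw [fiber_count hq hK _ hfix]
    congr 1
    rw [neg_eq_zero]
  simp only [h2]
  rw [Finset.sum_ite, Finset.sum_const, Finset.sum_const, smul_eq_mul, smul_eq_mul]
  set T := (univ.filter fun w : K × K => w.1 ^ (q + 1) + w.2 ^ (q + 1) = 0).card with hT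
  set C := (univ.filter fun w : K × K => ¬(w.1 ^ (q + 1) + w.2 ^ (q + 1) = 0)).card with hC
  have hTval : T = 1 + (q ^ 2 - 1) * (q + 1) := pair_count hq hK
  have hTC : T + C = q ^ 4 := by
    rw [hT, hC, Finset.card_filter_add_card_filter_not]
    rw [Finset.card_univ, Fintype.card_prod, hK]
    ring
  have hq2 : 2 ≤ q := hq.two_le
  have hD : ((q ^ 2 - 1 : ℕ) : ℤ) = (q : ℤ) ^ 2 - 1 := by
    have : 1 ≤ q ^ 2 := by nlinarith
    push_cast [this]
    ring
  zify
  zify at hTval hTC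
  rw [hD] at hTval ⊢
  linear_combination (-(q : ℤ)) * hTval + ((q : ℤ) + 1) * hTC


section BetaLemmas
variable (hq : IsPrimePow q) (hK : Fintype.card K = q ^ 2)
variable (βadd : ∀ x x' y, β (x + x') y = β x y + β x' y)
variable (βsmul : ∀ (a : K) (x y), β (a • x) y = a * β x y)
variable (βconj : ∀ x y, β y x = β x y ^ q)

include βsmul in
lemma bzero₁ (y : Fin 3 → K) : β 0 y = 0 := by
  have h := βsmul 0 0 y
  rwa [zero_smul, zero_mul] at h

include hq βsmul βconj in
lemma bzero₂ (x : Fin 3 → K) : β x 0 = 0 := by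
  rw [βconj 0 x, bzero₁ βsmul, zero_pow (by have := hq.two_le; omega)]

include βadd βsmul in
lemma bsub₁ (x y z : Fin 3 → K) : β (x - y) z = β x z - β y z := by
  have h : x - y = x + (-1 : K) • y := by rw [neg_one_smul]; ring
  rw [h, βadd, βsmul]; ring

include hq hK βadd βconj in
lemma badd₂ (x y y' : Fin 3 → K) : β x (y + y') = β x y + β x y' := by
  rw [βconj (y + y') x, βadd, frobadd hq hK, ← βconj y x, ← βconj y' x]

include hq hK βsmul βconj in
lemma bsmul₂ (a : K) (x y : Fin 3 → K) : β x (a • y) = a ^ q * β x y := by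
  rw [βconj (a • y) x, βsmul, mul_pow, ← βconj y x]

include hq hK βadd βsmul βconj in
lemma polar (u v : Fin 3 → K) (hu : β u u = 0) (hv : β v v = 0)
    (h : ∀ a : K, β (u + a • v) (u + a • v) = 0) : β u v = 0 := by
  have expand : ∀ a : K, a ^ q * β u v + a * β v u = 0 := by
    intro a
    have h1 := h a
    rw [βadd, βsmul, badd₂ hq hK βadd βconj, badd₂ hq hK βadd βconj,
      bsmul₂ hq hK βsmul βconj, bsmul₂ hq hK βsmul βconj, hu, hv] at h1
    linear_combination h1
  have h1 := expand 1
  rw [one_pow, one_mul, one_mul] at h1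
  obtain ⟨a, ha⟩ := exists_nonfixed hq.two_le hK
  have h2 := expand a
  have h3 : (a ^ q - a) * β u v = 0 := by linear_combination h2 - a * h1
  rcases mul_eq_zero.1 h3 with h4 | h4
  · exact absurd (by linear_combination h4) ha
  · exact h4

include hq hK βsmul βconj in
lemma exists_norm_one (v : Fin 3 → K) (hv : β v v ≠ 0) :
    ∃ a : K, a ≠ 0 ∧ β (a • v) (a • v) = 1 := by
  have hcf : (β v v) ^ q = β v v := (βconj v v).symm
  have hinvf : (β v v)⁻¹ ^ q = (β v v)⁻¹ := by rw [inv_pow, hcf]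
  have hcard := norm_count hq.two_le hK ((β v v)⁻¹) (inv_ne_zero hv) hinvf
  have hne : (univ.filter fun x : K => x ^ (q + 1) = (β v v)⁻¹).Nonempty := by
    rw [← Finset.card_pos, hcard]; omega
  obtain ⟨a, ha⟩ := hne
  rw [mem_filter] at ha
  have ha' := ha.2
  have ha0 : a ≠ 0 := by
    intro h; rw [h, zero_pow (by omega)] at ha'
    exact inv_ne_zero hv ha'.symm
  refine ⟨a, ha0, ?_⟩
  rw [βsmul, bsmul₂ hq hK βsmul βconj]
  have : a * (a ^ q * β v v) = a ^ (q + 1) * β v v := by rw [pow_succ]; ring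
  rw [this, ha', inv_mul_cancel₀ hv]

end BetaLemmas


section Basis
variable (hq : IsPrimePow q) (hK : Fintype.card K = q ^ 2)
variable (βadd : ∀ x x' y, β (x + x') y = β x y + β x' y)
variable (βsmul : ∀ (a : K) (x y), β (a • x) y = a * β x y)
variable (βconj : ∀ x y, β y x = β x y ^ q)
variable (βnondeg : ∀ x, (∀ y, β x y = 0) → x = 0)

include hq hK βadd βsmul βconj βnondeg in
lemma exists_orthonormal :
    ∃ e : Fin 3 → (Fin 3 → K),
      ∀ i j, β (e i) (e j) = if i = j then (1 : K) else 0 := by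
  have b02 := bzero₂ (β := β) hq βsmul βconj
  have ba2 := badd₂ (β := β) hq hK βadd βconj
  have bs2 := bsmul₂ (β := β) hq hK βsmul βconj
  have bsub := bsub₁ (β := β) βadd βsmul
  -- Step 1 : an anisotropic vector exists
  have h1 : ∃ v, β v v ≠ 0 := by
    by_contra hcon
    push_neg at hcon
    have hall : ∀ u v, β u v = 0 := by
      intro u v
      exact polar hq hK βadd βsmul βconj u v (hcon u) (hcon v) (fun a => hcon _)
    have : (fun _ => (1 : K)) = (0 : Fin 3 → K) := βnondeg _ (fun y => hall _ y)
    have h10 := congrFun this 0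
    simp at h10
  obtain ⟨v₁, hv₁⟩ := h1
  obtain ⟨a₁, ha₁0, ha₁⟩ := exists_norm_one hq hK βsmul βconj v₁ hv₁
  obtain ⟨e₁, he₁⟩ : ∃ e : Fin 3 → K, β e e = 1 := ⟨a₁ • v₁, ha₁⟩
  have hqpos : q ≠ 0 := by have := hq.two_le; omega
  -- Step 2 : anisotropic vector orthogonal to e₁
  have hproj₁ : ∀ x : Fin 3 → K, β (x - β x e₁ • e₁) e₁ = 0 := by
    intro x
    rw [bsub, βsmul, he₁, mul_one, sub_self]
  have hrest₁ : ∀ w, β w e₁ = 0 → (∀ u, β u e₁ = 0 → β w u = 0) → w = 0 := by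
    intro w hwe hw
    refine βnondeg w (fun x => ?_)
    have hdecomp : x = (x - β x e₁ • e₁) + β x e₁ • e₁ := by ring
    rw [hdecomp, ba2, bs2, hw _ (hproj₁ x), hwe, zero_add, mul_zero]
  have h2 : ∃ w, β w e₁ = 0 ∧ β w w ≠ 0 := by
    by_contra hcon
    push_neg at hcon
    have hall : ∀ u v, β u e₁ = 0 → β v e₁ = 0 → β u v = 0 := by
      intro u v hu hv
      refine polar hq hK βadd βsmul βconj u v (hcon u hu) (hcon v hv) (fun a => ?_)
      have : β (u + a • v) e₁ = 0 := by rw [βadd, βsmul, hu, hv, mul_zero, add_zero]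
      exact hcon _ this
    have hzero : ∀ w, β w e₁ = 0 → w = 0 := by
      intro w hw
      exact hrest₁ w hw (fun u hu => hall w u hw hu)
    have hspan : ∀ x : Fin 3 → K, x = β x e₁ • e₁ := by
      intro x
      have := hzero _ (hproj₁ x)
      have h' : x - β x e₁ • e₁ = 0 := this
      linear_combination (norm := module) h'
    have hx0 := hspan ![1, 0, 0]
    have hx1 := hspan ![0, 1, 0]
    have c00 := congrFun hx0 0
    have c01 := congrFun hx0 1
    have c10 := congrFun hx1 0
    have c11 := congrFun hx1 1
    simp only [Matrix.cons_val_zero, Matrix.cons_val_one, Matrix.head_cons,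
      Pi.smul_apply, smul_eq_mul] at c00 c01 c10 c11
    have hc0 : β ![1, 0, 0] e₁ ≠ 0 := fun h => by rw [h, zero_mul] at c00; exact one_ne_zero c00
    have he10 : e₁ 1 = 0 := by
      have := c01
      rcases mul_eq_zero.1 this.symm with h | h
      · exact absurd h hc0
      · exact h
    rw [he10, mul_zero] at c11
    exact one_ne_zero c11
  obtain ⟨w₂, hw₂e, hw₂⟩ := h2
  obtain ⟨a₂, ha₂0, ha₂⟩ := exists_norm_one hq hK βsmul βconj w₂ hw₂
  obtain ⟨e₂, he₂, he₂₁⟩ : ∃ e : Fin 3 → K, β e e = 1 ∧ β e e₁ = 0 :=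
    ⟨a₂ • w₂, ha₂, by rw [βsmul, hw₂e, mul_zero]⟩
  have he₁₂ : β e₁ e₂ = 0 := by rw [βconj e₂ e₁, he₂₁, zero_pow hqpos]
  -- Step 3 : anisotropic vector orthogonal to e₁ and e₂
  have hproj₂ : ∀ x : Fin 3 → K,
      β (x - β x e₁ • e₁ - β x e₂ • e₂) e₁ = 0 ∧
      β (x - β x e₁ • e₁ - β x e₂ • e₂) e₂ = 0 := by
    intro x
    constructor
    · rw [bsub, bsub, βsmul, βsmul, he₁, he₂₁, mul_one, mul_zero, sub_zero, sub_self]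
    · rw [bsub, bsub, βsmul, βsmul, he₁₂, he₂, mul_one, mul_zero, sub_zero, sub_self]
  have hrest₂ : ∀ w, β w e₁ = 0 → β w e₂ = 0 →
      (∀ u, β u e₁ = 0 → β u e₂ = 0 → β w u = 0) → w = 0 := by
    intro w hwe1 hwe2 hw
    refine βnondeg w (fun x => ?_)
    have hdecomp : x = (x - β x e₁ • e₁ - β x e₂ • e₂) + β x e₁ • e₁ + β x e₂ • e₂ := by
      ring
    rw [hdecomp, ba2, ba2, bs2, bs2, hw _ (hproj₂ x).1 (hproj₂ x).2, hwe1, hwe2]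
    ring
  have h3 : ∃ w, (β w e₁ = 0 ∧ β w e₂ = 0) ∧ β w w ≠ 0 := by
    by_contra hcon
    push_neg at hcon
    have hall : ∀ u v, β u e₁ = 0 → β u e₂ = 0 → β v e₁ = 0 → β v e₂ = 0 → β u v = 0 := by
      intro u v hu1 hu2 hv1 hv2
      refine polar hq hK βadd βsmul βconj u v (hcon u ⟨hu1, hu2⟩) (hcon v ⟨hv1, hv2⟩)
        (fun a => ?_)
      have h1 : β (u + a • v) e₁ = 0 := by rw [βadd, βsmul, hu1, hv1, mul_zero, add_zero]
      have h2 : β (u + a • v) e₂ = 0 := by rw [βadd, βsmul, hu2, hv2, mul_zero, add_zero]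
      exact hcon _ ⟨h1, h2⟩
    have hzero : ∀ w, β w e₁ = 0 → β w e₂ = 0 → w = 0 := by
      intro w hw1 hw2
      exact hrest₂ w hw1 hw2 (fun u hu1 hu2 => hall w u hw1 hw2 hu1 hu2)
    have hspan : ∀ x : Fin 3 → K, x = β x e₁ • e₁ + β x e₂ • e₂ := by
      intro x
      have := hzero _ (hproj₂ x).1 (hproj₂ x).2
      have h' : x - β x e₁ • e₁ - β x e₂ • e₂ = 0 := this
      linear_combination (norm := module) h'
    -- dimension contradiction
    have hmem : ∀ x : Fin 3 → K, x ∈ Submodule.span K ({e₁, e₂} : Set (Fin 3 → K)) := by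
      intro x
      rw [hspan x]
      exact add_mem (smul_mem _ _ (subset_span (by simp))) (smul_mem _ _ (subset_span (by simp)))
    have htop : (⊤ : Submodule K (Fin 3 → K)) ≤ Submodule.span K ({e₁, e₂} : Set (Fin 3 → K)) :=
      fun x _ => hmem x
    have hrank : Module.finrank K (Fin 3 → K) ≤ 2 := by
      have h1 : Module.finrank K (Fin 3 → K)
          = Module.finrank K (⊤ : Submodule K (Fin 3 → K)) := (finrank_top K _).symm
      have h2 : Module.finrank K (⊤ : Submodule K (Fin 3 → K))
          ≤ Module.finrank K (Submodule.span K ({e₁, e₂} : Set (Fin 3 → K))) :=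
        Submodule.finrank_mono htop
      have h3 : ({e₁, e₂} : Set (Fin 3 → K)) = (({e₁, e₂} : Finset (Fin 3 → K)) : Set _) := by
        simp
      have h4 : Module.finrank K (Submodule.span K ({e₁, e₂} : Set (Fin 3 → K))) ≤ 2 := by
        rw [h3]
        refine le_trans (finrank_span_finset_le_card _) ?_
        exact le_trans (Finset.card_insert_le _ _) (by simp)
      omega
    rw [Module.finrank_fin_fun] at hrank
    omega
  obtain ⟨w₃, ⟨hw₃e1, hw₃e2⟩, hw₃⟩ := h3
  obtain ⟨a₃, ha₃0, ha₃⟩ := exists_norm_one hq hK βsmul βconj w₃ hw₃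
  obtain ⟨e₃, he₃, he₃₁, he₃₂⟩ : ∃ e : Fin 3 → K, β e e = 1 ∧ β e e₁ = 0 ∧ β e e₂ = 0 :=
    ⟨a₃ • w₃, ha₃, by rw [βsmul, hw₃e1, mul_zero], by rw [βsmul, hw₃e2, mul_zero]⟩
  have he₁₃ : β e₁ e₃ = 0 := by rw [βconj e₃ e₁, he₃₁, zero_pow hqpos]
  have he₂₃ : β e₂ e₃ = 0 := by rw [βconj e₃ e₂, he₃₂, zero_pow hqpos]
  refine ⟨![e₁, e₂, e₃], ?_⟩
  intro i j
  fin_cases i <;> fin_cases j <;>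
    simp [he₁, he₂, he₃, he₁₂, he₂₁, he₁₃, he₃₁, he₂₃, he₃₂]

end Basis


section Count
variable (hq : IsPrimePow q) (hK : Fintype.card K = q ^ 2)
variable (βadd : ∀ x x' y, β (x + x') y = β x y + β x' y)
variable (βsmul : ∀ (a : K) (x y), β (a • x) y = a * β x y)
variable (βconj : ∀ x y, β y x = β x y ^ q)
variable (βnondeg : ∀ x, (∀ y, β x y = 0) → x = 0)

include hq hK βadd βsmul βconj βnondeg in
lemma iso_count :
    (univ.filter fun v : Fin 3 → K => β v v = 0).card = (q ^ 3 + 1) * (q ^ 2 - 1) + 1 := by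
  have ba2 := badd₂ (β := β) hq hK βadd βconj
  have bs2 := bsmul₂ (β := β) hq hK βsmul βconj
  obtain ⟨e, he⟩ := exists_orthonormal hq hK βadd βsmul βconj βnondeg
  -- expansion lemmas
  have hsum1 : ∀ (c : Fin 3 → K) (y : Fin 3 → K),
      β (∑ i, c i • e i) y = ∑ i, c i * β (e i) y := by
    intro c y
    let L : (Fin 3 → K) →ₗ[K] K :=
      { toFun := fun x => β x y
        map_add' := fun a b => βadd a b y
        map_smul' := fun a x => βsmul a x y }
    have h1 : β (∑ i, c i • e i) y = L (∑ i, c i • e i) := rfl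
    rw [h1, map_sum]
    refine Finset.sum_congr rfl (fun i _ => ?_)
    show β (c i • e i) y = _
    rw [βsmul]
  have hsum2 : ∀ (c : Fin 3 → K) (x : Fin 3 → K),
      β x (∑ i, c i • e i) = ∑ i, c i ^ q * β x (e i) := by
    intro c x
    let M : (Fin 3 → K) →+ K := AddMonoidHom.mk' (fun z => β x z) (fun a b => ba2 x a b)
    have h1 : β x (∑ i, c i • e i) = M (∑ i, c i • e i) := rfl
    rw [h1, map_sum]
    refine Finset.sum_congr rfl (fun i _ => ?_)
    show β x (c i • e i) = _
    rw [bs2]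
  -- the quadratic form in coordinates
  have hli : LinearIndependent K e := by
    rw [Fintype.linearIndependent_iff]
    intro c hc j
    have h1 := hsum1 c (e j)
    rw [hc, bzero₁ βsmul] at h1
    have h2 : ∑ i, c i * β (e i) (e j) = c j := by
      simp only [he, mul_ite, mul_one, mul_zero]
      rw [Finset.sum_ite_eq' univ j c]
      simp
    rw [h2] at h1
    exact h1.symm
  have hcard : Fintype.card (Fin 3) = Module.finrank K (Fin 3 → K) := by
    simp [Module.finrank_fin_fun]
  let b : Module.Basis (Fin 3) K (Fin 3 → K) := basisOfLinearIndependentOfCardEqFinrank hli hcard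
  have hb : ⇑b = e := coe_basisOfLinearIndependentOfCardEqFinrank hli hcard
  have hkey : ∀ v : Fin 3 → K, β v v = ∑ i, (b.equivFun v i) ^ (q + 1) := by
    intro v
    set c : Fin 3 → K := b.equivFun v with hc
    have hv : v = ∑ i, c i • e i := by
      conv_lhs => rw [← Module.Basis.sum_equivFun b v]
      simp [hb, hc]
    calc β v v = β (∑ i, c i • e i) (∑ j, c j • e j) := by rw [← hv]
      _ = ∑ i, c i * β (e i) (∑ j, c j • e j) := hsum1 c _
      _ = ∑ i, c i * ∑ j, c j ^ q * β (e i) (e j) := by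
          refine Finset.sum_congr rfl (fun i _ => ?_)
          rw [hsum2]
      _ = ∑ i, c i ^ (q + 1) := by
          refine Finset.sum_congr rfl (fun i _ => ?_)
          have : ∑ j, c j ^ q * β (e i) (e j) = c i ^ q := by
            simp only [he, mul_ite, mul_one, mul_zero]
            rw [Finset.sum_ite_eq univ i (fun j => c j ^ q)]
            simp
          rw [this, pow_succ]
          ring
  have hbij : (univ.filter fun v : Fin 3 → K => β v v = 0).card
      = (univ.filter fun c : Fin 3 → K => ∑ i, c i ^ (q + 1) = 0).card := by
    refine Finset.card_bij' (fun v _ => b.equivFun v) (fun c _ => b.equivFun.symm c)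
      ?_ ?_ ?_ ?_
    · intro v hv
      rw [mem_filter] at hv ⊢
      exact ⟨mem_univ _, by rw [← hkey v]; exact hv.2⟩
    · intro c hc
      rw [mem_filter] at hc ⊢
      refine ⟨mem_univ _, ?_⟩
      rw [hkey (b.equivFun.symm c), LinearEquiv.apply_symm_apply]
      exact hc.2
    · intro v _; exact LinearEquiv.symm_apply_apply _ _
    · intro c _; exact LinearEquiv.apply_symm_apply _ _
  rw [hbij]
  exact triple_count hq hK

end Count


section Proj
variable (hq : IsPrimePow q) (hK : Fintype.card K = q ^ 2)
variable (βadd : ∀ x x' y, β (x + x') y = β x y + β x' y)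
variable (βsmul : ∀ (a : K) (x y), β (a • x) y = a * β x y)
variable (βconj : ∀ x y, β y x = β x y ^ q)
variable (βnondeg : ∀ x, (∀ y, β x y = 0) → x = 0)

include hq hK βadd βsmul βconj βnondeg in
lemma herm_card :
    Nat.card {P : Projectivization K (Fin 3 → K) // β P.rep P.rep = 0} = q ^ 3 + 1 := by
  have bs2 := bsmul₂ (β := β) hq hK βsmul βconj
  have hiso_smul : ∀ (a : K) (v : Fin 3 → K), β v v = 0 → β (a • v) (a • v) = 0 := by
    intro a v hv
    rw [βsmul, bs2, hv, mul_zero, mul_zero]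
  set H := {P : Projectivization K (Fin 3 → K) // β P.rep P.rep = 0} with hH
  set S := {v : Fin 3 → K // v ≠ 0 ∧ β v v = 0} with hS
  have hbij : Function.Bijective
      (fun cP : Kˣ × H => (⟨(cP.1 : K) • cP.2.val.rep,
        smul_ne_zero cP.1.ne_zero cP.2.val.rep_nonzero,
        hiso_smul _ _ cP.2.prop⟩ : S)) := by
    constructor
    · rintro ⟨c, P⟩ ⟨d, Q⟩ hcd
      have h1 : (c : K) • P.val.rep = (d : K) • Q.val.rep := congrArg Subtype.val hcd
      have hPQ : P.val = Q.val := by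
        have h2 : Projectivization.mk K ((c : K) • P.val.rep)
            (smul_ne_zero c.ne_zero P.val.rep_nonzero) = P.val := by
          rw [show Projectivization.mk K ((c : K) • P.val.rep)
              (smul_ne_zero c.ne_zero P.val.rep_nonzero)
              = Projectivization.mk K P.val.rep P.val.rep_nonzero from
            (Projectivization.mk_eq_mk_iff K _ _ _ _).2 ⟨c, rfl⟩]
          exact P.val.mk_rep
        have h3 : Projectivization.mk K ((d : K) • Q.val.rep)
            (smul_ne_zero d.ne_zero Q.val.rep_nonzero) = Q.val := by
          rw [show Projectivization.mk K ((d : K) • Q.val.rep)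
              (smul_ne_zero d.ne_zero Q.val.rep_nonzero)
              = Projectivization.mk K Q.val.rep Q.val.rep_nonzero from
            (Projectivization.mk_eq_mk_iff K _ _ _ _).2 ⟨d, rfl⟩]
          exact Q.val.mk_rep
        rw [← h2, ← h3]
        congr 1
      have hP : P = Q := Subtype.ext hPQ
      subst hP
      have hcd' : (c : K) = (d : K) := by
        have h4 : ((c : K) - (d : K)) • P.val.rep = 0 := by
          rw [sub_smul, h1, sub_self]
        rcases smul_eq_zero.1 h4 with h | h
        · linear_combination h
        · exact absurd h P.val.rep_nonzero
      exact Prod.ext (Units.ext hcd') rfl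
    · rintro ⟨v, hv0, hviso⟩
      obtain ⟨a, ha⟩ := Projectivization.exists_smul_eq_mk_rep K v hv0
      have hrep : (Projectivization.mk K v hv0).rep = (a : K) • v := by
        rw [← ha]; rfl
      have hPiso : β (Projectivization.mk K v hv0).rep (Projectivization.mk K v hv0).rep = 0 := by
        rw [hrep]; exact hiso_smul _ _ hviso
      refine ⟨⟨a⁻¹, ⟨Projectivization.mk K v hv0, hPiso⟩⟩, ?_⟩
      apply Subtype.ext
      show ((a⁻¹ : Kˣ) : K) • (Projectivization.mk K v hv0).rep = v
      rw [hrep, smul_smul]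
      norm_cast
      simp
  have hcards : Nat.card (Kˣ × H) = Nat.card S := Nat.card_eq_of_bijective _ hbij
  have hS_card : Nat.card S = (q ^ 3 + 1) * (q ^ 2 - 1) := by
    rw [hS, Nat.card_eq_fintype_card, Fintype.card_subtype]
    have hfilter : (univ.filter fun v : Fin 3 → K => v ≠ 0 ∧ β v v = 0)
        = (univ.filter fun v : Fin 3 → K => β v v = 0).erase 0 := by
      ext v
      simp only [Finset.mem_erase, mem_filter, mem_univ, true_and]
    rw [hfilter, Finset.card_erase_of_mem
      (by simp only [mem_filter, mem_univ, true_and]; exact bzero₁ βsmul 0),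
      iso_count hq hK βadd βsmul βconj βnondeg]
    omega
  have hunits : Nat.card Kˣ = q ^ 2 - 1 := by
    rw [Nat.card_eq_fintype_card, Fintype.card_units, hK]
  rw [Nat.card_prod, hunits, hS_card] at hcards
  have hpos : 0 < q ^ 2 - 1 := by
    have h2 := hq.two_le
    have h3 : 2 * 2 ≤ q * q := Nat.mul_le_mul h2 h2
    have h4 : q ^ 2 = q * q := sq q
    omega
  have := hcards
  rw [mul_comm (q ^ 3 + 1) _] at this
  exact Nat.eq_of_mul_eq_mul_left hpos this

include hq hK βadd βsmul βconj βnondeg in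
lemma witt (u v : Fin 3 → K) (hu0 : u ≠ 0) (hv0 : v ≠ 0) (huu : β u u = 0)
    (hvv : β v v = 0) (huv : β u v = 0) : ∃ c : K, v = c • u := by
  have ba2 := badd₂ (β := β) hq hK βadd βconj
  have bs2 := bsmul₂ (β := β) hq hK βsmul βconj
  have hqpos : q ≠ 0 := by have := hq.two_le; omega
  by_contra hcon
  push_neg at hcon
  have hvu : β v u = 0 := by rw [βconj u v, huv, zero_pow hqpos]
  -- u, v are linearly independent
  have hli : LinearIndependent K ![u, v] := by
    rw [linearIndependent_fin2]
    refine ⟨by simpa using hv0, fun a hav => ?_⟩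
    simp only [Matrix.cons_val_one, Matrix.head_cons, Matrix.cons_val_zero] at hav
    have ha0 : a ≠ 0 := by rintro rfl; rw [zero_smul] at hav; exact hu0 hav.symm
    exact hcon a⁻¹ (by rw [← hav, smul_smul, inv_mul_cancel₀ ha0, one_smul])
  let φ : (Fin 3 → K) →ₗ[K] (Fin 2 → K) :=
    { toFun := fun x => ![β x u, β x v]
      map_add' := by intro x y; funext i; fin_cases i <;> simp [βadd]
      map_smul' := by intro a x; funext i; fin_cases i <;> simp [βsmul] }
  have hφ0 : ∀ x, φ x 0 = β x u := fun x => rfl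
  have hφ1 : ∀ x, φ x 1 = β x v := fun x => rfl
  have hker : Submodule.span K (Set.range ![u, v]) ≤ LinearMap.ker φ := by
    rw [Submodule.span_le]
    rintro _ ⟨i, rfl⟩
    have hgoal : ∀ z : Fin 3 → K, β z u = 0 → β z v = 0 → φ z = 0 := by
      intro z h1 h2
      funext j
      fin_cases j
      · simpa [hφ0] using h1
      · simpa [hφ1] using h2
    fin_cases i
    · exact LinearMap.mem_ker.2 (hgoal u huu huv)
    · exact LinearMap.mem_ker.2 (hgoal v hvu hvv)
  have h2 : 2 ≤ Module.finrank K (LinearMap.ker φ) := by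
    have h3 : Module.finrank K (Submodule.span K (Set.range ![u, v])) = 2 := by
      rw [finrank_span_eq_card hli]; simp
    have h4 := Submodule.finrank_mono hker
    omega
  have h4 : Module.finrank K (LinearMap.range φ) ≤ 1 := by
    have h5 := LinearMap.finrank_range_add_finrank_ker φ
    rw [Module.finrank_fin_fun] at h5
    omega
  have hgen : ∃ w : Fin 2 → K, ∀ x : Fin 3 → K, ∃ cx : K,
      β x u = cx * w 0 ∧ β x v = cx * w 1 := by
    by_cases hz : ∀ x : Fin 3 → K, φ x = 0
    · refine ⟨0, fun x => ⟨0, ?_, ?_⟩⟩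
      · have h := congrFun (hz x) 0; rw [hφ0] at h; simpa using h
      · have h := congrFun (hz x) 1; rw [hφ1] at h; simpa using h
    · push_neg at hz
      obtain ⟨x₀, hx₀⟩ := hz
      refine ⟨φ x₀, fun x => ?_⟩
      have hmem : φ x ∈ Submodule.span K {φ x₀} := by
        by_contra hnm
        have hli2 : LinearIndependent K ![φ x, φ x₀] := by
          rw [linearIndependent_fin2]
          refine ⟨by simpa using hx₀, fun a ha => hnm ?_⟩
          simp only [Matrix.cons_val_one, Matrix.head_cons, Matrix.cons_val_zero] at ha
          exact (Submodule.mem_span_singleton).2 ⟨a, ha⟩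
        have hsub : Submodule.span K (Set.range ![φ x, φ x₀]) ≤ LinearMap.range φ := by
          rw [Submodule.span_le]
          rintro _ ⟨i, rfl⟩
          fin_cases i
          · exact ⟨x, rfl⟩
          · exact ⟨x₀, rfl⟩
        have h6 := Submodule.finrank_mono hsub
        rw [finrank_span_eq_card hli2] at h6
        simp at h6
        omega
      obtain ⟨cx, hcx⟩ := Submodule.mem_span_singleton.1 hmem
      refine ⟨cx, ?_, ?_⟩
      · have h := congrFun hcx 0
        simp only [Pi.smul_apply, smul_eq_mul, hφ0] at h
        exact h.symm
      · have h := congrFun hcx 1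
        simp only [Pi.smul_apply, smul_eq_mul, hφ1] at h
        exact h.symm
  obtain ⟨w, hw⟩ := hgen
  by_cases hw0 : w = 0
  · have hxu : ∀ x, β x u = 0 := by
      intro x
      obtain ⟨cx, h1, _⟩ := hw x
      rw [hw0] at h1
      simpa using h1
    exact hu0 (βnondeg u (fun y => by rw [βconj y u, hxu y, zero_pow hqpos]))
  · have hz : ∀ x, β x ((w 1) ^ q • u + (-((w 0) ^ q)) • v) = 0 := by
      intro x
      obtain ⟨cx, h1, h2⟩ := hw x
      rw [ba2, bs2, bs2, powpow hK, h1, h2]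
      have hneg : (-(w 0 ^ q)) ^ q = -(w 0) := by rw [frobneg hq hK, powpow hK]
      rw [hneg]
      ring
    have hzz : (w 1) ^ q • u + (-((w 0) ^ q)) • v = 0 :=
      βnondeg _ (fun y => by rw [βconj y _, hz y, zero_pow hqpos])
    by_cases hw0' : w 0 = 0
    · have hw1 : w 1 ≠ 0 := by
        intro h1
        apply hw0
        funext i
        fin_cases i
        · simpa using hw0'
        · simpa using h1
      rw [hw0'] at hzz
      rw [zero_pow hqpos, neg_zero, zero_smul, add_zero] at hzz
      rcases smul_eq_zero.1 hzz with h | h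
      · exact pow_ne_zero _ hw1 h
      · exact hu0 h
    · apply hcon (((w 0) ^ q)⁻¹ * (w 1) ^ q)
      have hq0 : (w 0) ^ q ≠ 0 := pow_ne_zero _ hw0'
      have h6 : (w 1) ^ q • u = (w 0) ^ q • v := by
        linear_combination (norm := module) hzz
      rw [mul_smul, h6, smul_smul, inv_mul_cancel₀ hq0, one_smul]

end Proj

end Aux
end Stmt11X



open scoped TensorProduct

noncomputable section

namespace Stmt11

variable (K : Type*) [Field K]

/-- The Hermitian curve `H(2,q²)`: the projective points of `F_{q²}³` spanned by
nonzero isotropic vectors of `β`. -/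
def HermPt (β : (Fin 3 → K) → (Fin 3 → K) → K) : Type _ :=
  {P : Projectivization K (Fin 3 → K) // β P.rep P.rep = 0}

/-- For each permutation `f` of the Hermitian curve `H(2,q²)`, the set
`graph(f) = {X ⊗ X^f : X ∈ H(2,q²)}` is a set of `q³ + 1` totally isotropic points of
the Hermitian variety defined by `β ⊗ β`, no two distinct elements of which are
orthogonal with respect to `β ⊗ β`. -/
theorem graph_is_ovoid
    (q : ℕ) (hq : IsPrimePow q)
    (K : Type*) [Field K] [Fintype K] (hK : Fintype.card K = q ^ 2)
    (β : (Fin 3 → K) → (Fin 3 → K) → K)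
    (βadd : ∀ x x' y, β (x + x') y = β x y + β x' y)
    (βsmul : ∀ (a : K) (x y), β (a • x) y = a * β x y)
    (βconj : ∀ x y, β y x = β x y ^ q)
    (βnondeg : ∀ x, (∀ y, β x y = 0) → x = 0)
    (B : (Fin 3 → K) ⊗[K] (Fin 3 → K) → (Fin 3 → K) ⊗[K] (Fin 3 → K) → K)
    (hB : ∀ u₁ v₁ u₂ v₂ : Fin 3 → K,
      B (u₁ ⊗ₜ[K] v₁) (u₂ ⊗ₜ[K] v₂) = β u₁ u₂ * β v₁ v₂)
    (f : Equiv.Perm (HermPt K β)) :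
    Set.ncard {t : (Fin 3 → K) ⊗[K] (Fin 3 → K) |
        ∃ X : HermPt K β, t = X.val.rep ⊗ₜ[K] (f X).val.rep} = q ^ 3 + 1 ∧
    (∀ X : HermPt K β,
      B (X.val.rep ⊗ₜ[K] (f X).val.rep) (X.val.rep ⊗ₜ[K] (f X).val.rep) = 0) ∧
    (∀ X Y : HermPt K β, X ≠ Y →
      B (X.val.rep ⊗ₜ[K] (f X).val.rep) (Y.val.rep ⊗ₜ[K] (f Y).val.rep) ≠ 0) := by
  classical
  have hqpos : q ≠ 0 := by have := hq.two_le; omega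
  -- part 2 : total isotropy
  have part2 : ∀ X : HermPt K β,
      B (X.val.rep ⊗ₜ[K] (f X).val.rep) (X.val.rep ⊗ₜ[K] (f X).val.rep) = 0 := by
    intro X
    rw [hB, X.2, zero_mul]
  -- key orthogonality fact
  have key : ∀ X Y : HermPt K β, X ≠ Y → β X.val.rep Y.val.rep ≠ 0 := by
    intro X Y hne h0
    obtain ⟨c, hc⟩ := Stmt11X.witt hq hK βadd βsmul βconj βnondeg X.val.rep Y.val.rep
      X.val.rep_nonzero Y.val.rep_nonzero X.2 Y.2 h0
    have hc0 : c ≠ 0 := fun h => Y.val.rep_nonzero (by rw [hc, h, zero_smul])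
    apply hne
    apply Subtype.ext
    have hYX : Y.val = X.val := by
      rw [← X.val.mk_rep, ← Y.val.mk_rep]
      refine (Projectivization.mk_eq_mk_iff K _ _ _ _).2 ⟨Units.mk0 c hc0, ?_⟩
      rw [Units.smul_def]
      exact hc.symm
    exact hYX.symm
  have part3 : ∀ X Y : HermPt K β, X ≠ Y →
      B (X.val.rep ⊗ₜ[K] (f X).val.rep) (Y.val.rep ⊗ₜ[K] (f Y).val.rep) ≠ 0 := by
    intro X Y hne
    rw [hB]
    exact mul_ne_zero (key X Y hne) (key (f X) (f Y) (fun h => hne (f.injective h)))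
  refine ⟨?_, part2, part3⟩
  -- part 1 : cardinality
  set g : HermPt K β → (Fin 3 → K) ⊗[K] (Fin 3 → K) :=
    fun X => X.val.rep ⊗ₜ[K] (f X).val.rep with hg
  have hginj : Function.Injective g := by
    intro X Y h
    by_contra hne
    have h3 := part3 X Y hne
    rw [show X.val.rep ⊗ₜ[K] (f X).val.rep = g X from rfl,
      show Y.val.rep ⊗ₜ[K] (f Y).val.rep = g Y from rfl, h] at h3
    exact h3 (part2 Y)
  have hset : {t : (Fin 3 → K) ⊗[K] (Fin 3 → K) |
      ∃ X : HermPt K β, t = X.val.rep ⊗ₜ[K] (f X).val.rep} = Set.range g := by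
    ext t
    simp only [Set.mem_setOf_eq, Set.mem_range, hg]
    exact ⟨fun ⟨X, hX⟩ => ⟨X, hX.symm⟩, fun ⟨X, hX⟩ => ⟨X, hX.symm⟩⟩
  rw [hset, ← Nat.card_coe_set_eq, Nat.card_range_of_injective hginj]
  exact Stmt11X.herm_card hq hK βadd βsmul βconj βnondeg


end Stmt11
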